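/- Consider the set S := {(x, λ, u) ∈ ℝ^N × ℝ × ℝ^N : λ ≤ λmax, qᵢ·xᵢ + c₀ᵢ + λ + uᵢ = 0 for all i, and Σᵢ xᵢ = Σᵢ aᵢ}. Then S is nonempty, and there exists exactly one point (x*, λ*, u*) ∈ S at which the function (x, λ, u) ↦ (1/2)·Σᵢ uᵢ² attains its minimum over S. -/

import Mathlib

/-- The feasible set of socially acceptable equilibria is nonempty, and the squared-norm
objective `(1/2) * ∑ i, (u i)^2` attains its minimum over it at exactly one point. -/
theorem stmt_5 (N : ℕ) (hN : 0 < N) (q c₀ a : Fin N → ℝ) (hq : ∀ i, 0 < q i)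
    (lamMax : ℝ)
    (S : Set ((Fin N → ℝ) × ℝ × (Fin N → ℝ)))
    (hS : S = {p : (Fin N → ℝ) × ℝ × (Fin N → ℝ) |
        p.2.1 ≤ lamMax ∧ (∀ i, q i * p.1 i + c₀ i + p.2.1 + p.2.2 i = 0) ∧
          ∑ i, p.1 i = ∑ i, a i}) :
    S.Nonempty ∧
      ∃! p : (Fin N → ℝ) × ℝ × (Fin N → ℝ),
        p ∈ S ∧ ∀ p' ∈ S, (1 / 2) * ∑ i, (p.2.2 i) ^ 2 ≤ (1 / 2) * ∑ i, (p'.2.2 i) ^ 2 := by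
  have hq0 : ∀ i, q i ≠ 0 := fun i => (hq i).ne'
  have hNE : (Finset.univ : Finset (Fin N)).Nonempty := ⟨⟨0, hN⟩, Finset.mem_univ _⟩
  set A := ∑ i, a i with hA
  set Q1 := ∑ i : Fin N, (q i)⁻¹ with hQ1
  set Q2 := ∑ i : Fin N, ((q i) ^ 2)⁻¹ with hQ2
  have hQ1pos : 0 < Q1 := Finset.sum_pos (fun i _ => inv_pos.mpr (hq i)) hNE
  have hQ2pos : 0 < Q2 := Finset.sum_pos (fun i _ => inv_pos.mpr (pow_pos (hq i) 2)) hNE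
  set C := ∑ i, c₀ i * (q i)⁻¹ with hC
  set lam := min (-(A + C) / Q1) lamMax with hlam
  set μ := (A + C + lam * Q1) / Q2 with hμ
  set x : Fin N → ℝ := fun i => (μ / q i - c₀ i - lam) / q i with hx
  set u : Fin N → ℝ := fun i => -(μ / q i) with hu
  have hlamle : lam ≤ lamMax := min_le_right _ _
  have hμQ2 : μ * Q2 = A + C + lam * Q1 := div_mul_cancel₀ _ hQ2pos.ne'
  have hxsum : ∑ i, x i = A := by
    have h1 : ∀ i : Fin N, x i =
        μ * ((q i) ^ 2)⁻¹ - c₀ i * (q i)⁻¹ - lam * (q i)⁻¹ := by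
      intro i
      rw [hx]
      field_simp [hq0 i]
    rw [Finset.sum_congr rfl (fun i _ => h1 i)]
    rw [Finset.sum_sub_distrib, Finset.sum_sub_distrib,
      ← Finset.mul_sum, ← Finset.mul_sum, ← hQ2, ← hC, ← hQ1, hμQ2]
    ring
  have hxi : ∀ i, q i * x i = μ / q i - c₀ i - lam := by
    intro i
    show q i * ((μ / q i - c₀ i - lam) / q i) = _
    rw [mul_comm]
    exact div_mul_cancel₀ _ (hq0 i)
  have hui : ∀ i, u i = -(μ / q i) := fun i => rfl
  have hconstraint : ∀ i, q i * x i + c₀ i + lam + u i = 0 := by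
    intro i
    rw [hxi i, hui i]
    ring
  have hμsign : μ = 0 ∨ (lam = lamMax ∧ μ ≤ 0) := by
    rcases le_total (-(A + C) / Q1) lamMax with h | h
    · left
      have hl : lam = -(A + C) / Q1 := min_eq_left h
      have hln : lam * Q1 = -(A + C) := by
        rw [hl]; exact div_mul_cancel₀ _ hQ1pos.ne'
      rw [hμ, hln]
      simp only [div_eq_zero_iff]
      left; ring
    · right
      refine ⟨min_eq_right h, ?_⟩
      rw [hμ]
      apply div_nonpos_of_nonpos_of_nonneg _ hQ2pos.le
      have hle : lam ≤ -(A + C) / Q1 := min_le_left _ _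
      have : lam * Q1 ≤ -(A + C) := by
        calc lam * Q1 ≤ (-(A + C) / Q1) * Q1 := by
              exact mul_le_mul_of_nonneg_right hle hQ1pos.le
          _ = -(A + C) := div_mul_cancel₀ _ hQ1pos.ne'
      linarith
  clear_value A Q1 Q2 C lam μ x u
  subst hS
  have hmem : (x, lam, u) ∈ {p : (Fin N → ℝ) × ℝ × (Fin N → ℝ) |
      p.2.1 ≤ lamMax ∧ (∀ i, q i * p.1 i + c₀ i + p.2.1 + p.2.2 i = 0) ∧
        ∑ i, p.1 i = A} := ⟨hlamle, hconstraint, hxsum⟩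
  -- Key lemma: for any feasible point, the objective is at least that of (x, lam, u),
  -- with equality only at (x, lam, u).
  have key : ∀ px : Fin N → ℝ, ∀ pl : ℝ, ∀ pu : Fin N → ℝ,
      pl ≤ lamMax → (∀ i, q i * px i + c₀ i + pl + pu i = 0) → (∑ i, px i = A) →
      (∑ i, (u i) ^ 2 ≤ ∑ i, (pu i) ^ 2 ∧
        (∑ i, (pu i) ^ 2 = ∑ i, (u i) ^ 2 → px = x ∧ pl = lam ∧ pu = u)) := by
    intro px pl pu hple hpc hpsum
    set w : Fin N → ℝ := fun i => q i * px i + c₀ i + pl with hw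
    have hwdef : ∀ i, w i = q i * px i + c₀ i + pl := fun i => rfl
    have hpu : ∀ i, pu i = -(w i) := by
      intro i
      have h1 := hpc i
      rw [hwdef i]
      linarith
    have hsq : ∑ i, (pu i) ^ 2 = ∑ i, (w i) ^ 2 :=
      Finset.sum_congr rfl (fun i _ => by rw [hpu i]; ring)
    have husq : ∑ i, (u i) ^ 2 = ∑ i, (μ / q i) ^ 2 :=
      Finset.sum_congr rfl (fun i _ => by rw [hui i]; ring)
    -- pointwise decomposition
    have hdecomp : ∀ i : Fin N, (w i) ^ 2 =
        (μ / q i) ^ 2 + 2 * ((μ / q i) * (w i - μ / q i)) + (w i - μ / q i) ^ 2 := by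
      intro i; ring
    -- cross term
    have hcross : ∀ i : Fin N, (μ / q i) * (w i - μ / q i) =
        μ * (px i - x i) + (μ * (pl - lam)) * (q i)⁻¹ := by
      intro i
      have hwi : w i - μ / q i = q i * (px i - x i) + (pl - lam) := by
        rw [hwdef i, mul_sub, hxi i]; ring
      rw [hwi]
      field_simp [hq0 i]
    have hcrosssum : ∑ i, (μ / q i) * (w i - μ / q i) = μ * (pl - lam) * Q1 := by
      rw [Finset.sum_congr rfl (fun i _ => hcross i)]
      rw [Finset.sum_add_distrib, ← Finset.mul_sum, ← Finset.mul_sum, ← hQ1,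
        Finset.sum_sub_distrib, hpsum, hxsum]
      ring
    have hcrossnonneg : 0 ≤ μ * (pl - lam) * Q1 := by
      rcases hμsign with h0 | ⟨hlm, hμle⟩
      · rw [h0]; ring_nf; exact le_refl 0
      · have h1 : pl - lam ≤ 0 := by rw [hlm]; linarith
        nlinarith [mul_nonneg (neg_nonneg.mpr hμle) (neg_nonneg.mpr h1), hQ1pos.le]
    have hsqsumnonneg : 0 ≤ ∑ i, (w i - μ / q i) ^ 2 :=
      Finset.sum_nonneg (fun i _ => sq_nonneg _)
    have hmain : ∑ i, (pu i) ^ 2 =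
        ∑ i, (u i) ^ 2 + 2 * (μ * (pl - lam) * Q1) + ∑ i, (w i - μ / q i) ^ 2 := by
      rw [hsq, husq, Finset.sum_congr rfl (fun i _ => hdecomp i),
        Finset.sum_add_distrib, Finset.sum_add_distrib, ← Finset.mul_sum, hcrosssum]
    constructor
    · rw [hmain]; linarith
    · intro heq
      rw [hmain] at heq
      have hzero : ∑ i, (w i - μ / q i) ^ 2 = 0 := by linarith
      have hweq : ∀ i : Fin N, w i = μ / q i := by
        intro i
        have := (Finset.sum_eq_zero_iff_of_nonneg
          (fun i _ => sq_nonneg (w i - μ / q i))).mp hzero i (Finset.mem_univ i)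
        have h2 : w i - μ / q i = 0 := (pow_eq_zero_iff two_ne_zero).mp this
        linarith
      -- deduce pl = lam
      have hdiff : ∀ i : Fin N, px i - x i = (lam - pl) * (q i)⁻¹ := by
        intro i
        have hwi : q i * (px i - x i) + (pl - lam) = 0 := by
          have h3 := hweq i
          rw [hwdef i] at h3
          rw [mul_sub, hxi i]
          linarith
        have h4 : px i - x i = (lam - pl) / q i := by
          rw [eq_div_iff (hq0 i)]
          linear_combination hwi
        rw [h4, div_eq_mul_inv]
      have hsumdiff : (lam - pl) * Q1 = 0 := by
        have : ∑ i, (px i - x i) = (lam - pl) * Q1 := by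
          rw [Finset.sum_congr rfl (fun i _ => hdiff i), ← Finset.mul_sum, ← hQ1]
        rw [← this, Finset.sum_sub_distrib, hpsum, hxsum, sub_self]
      have hpl : pl = lam := by
        rcases mul_eq_zero.mp hsumdiff with h | h
        · linarith
        · exact absurd h hQ1pos.ne'
      have hpx : px = x := by
        funext i
        have := hdiff i
        rw [hpl, sub_self, zero_mul] at this
        linarith
      refine ⟨hpx, hpl, ?_⟩
      funext i
      rw [hpu i, hweq i, hui i]
  refine ⟨⟨(x, lam, u), hmem⟩, (x, lam, u), ⟨hmem, ?_⟩, ?_⟩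
  · rintro ⟨px, pl, pu⟩ ⟨hple, hpc, hpsum⟩
    have h1 := (key px pl pu hple hpc hpsum).1
    show (1 / 2) * ∑ i, (u i) ^ 2 ≤ (1 / 2) * ∑ i, (pu i) ^ 2
    linarith
  · rintro ⟨px, pl, pu⟩ ⟨⟨hple, hpc, hpsum⟩, hmin⟩
    have h1 := (key px pl pu hple hpc hpsum).1
    have h2 : (1 / 2) * ∑ i, (pu i) ^ 2 ≤ (1 / 2) * ∑ i, (u i) ^ 2 :=
      hmin (x, lam, u) hmem
    have heq : ∑ i, (pu i) ^ 2 = ∑ i, (u i) ^ 2 := by linarith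
    obtain ⟨hpx, hpl, hpu⟩ := (key px pl pu hple hpc hpsum).2 heq
    simp [hpx, hpl, hpu]
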